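/- Let k be an infinite field, K a finite separable field extension of k, N a positive natural number, and x ∈ K with x ∉ k. Then the set of α ∈ k such that (x + α)^N ∈ k has at most N elements. -/

import Mathlib

open Polynomial

/-- Let `K/k` be a finite separable extension of an infinite field,
`x ∈ K \ k` and `N ≥ 1`. Then `{α ∈ k | (x + α)^N ∈ k}` has at most `N` elements. -/
theorem stmt5 {k K : Type*} [Field k] [Field K] [Algebra k K]
    [FiniteDimensional k K] [Algebra.IsSeparable k K] [Infinite k]
    (x : K) (hx : x ∉ Set.range (algebraMap k K)) (N : ℕ) (hN : 0 < N) :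
    {α : k | (x + algebraMap k K α) ^ N ∈ Set.range (algebraMap k K)}.Finite ∧
      {α : k | (x + algebraMap k K α) ^ N ∈ Set.range (algebraMap k K)}.ncard ≤ N := by
  classical
  set L := AlgebraicClosure K
  have hint : IsIntegral k x := Algebra.IsIntegral.isIntegral x
  have hx' : x ∉ (algebraMap k K).range := hx
  have hdeg : 2 ≤ (minpoly k x).natDegree := (minpoly.two_le_natDegree_iff hint).mpr hx'
  have hsep : (minpoly k x).Separable := Algebra.IsSeparable.isSeparable k x
  have hne : minpoly k x ≠ 0 := minpoly.ne_zero hint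
  set p : L[X] := (minpoly k x).map (algebraMap k L) with hp
  have hsplits : Splits p := IsAlgClosed.splits _
  have hcard : p.roots.card = (minpoly k x).natDegree := by
    rw [splits_iff_card_roots.mp hsplits, hp, natDegree_map]
  have hnodup : p.roots.Nodup := Polynomial.nodup_roots (hsep.map (f := algebraMap k L))
  -- x's image is a root
  have hxroot : algebraMap K L x ∈ p.roots := by
    rw [mem_roots (by rw [hp]; exact Polynomial.map_ne_zero hne)]
    have : aeval x (minpoly k x) = 0 := minpoly.aeval k x
    have := congrArg (algebraMap K L) this
    rw [map_zero] at this
    simpa [hp, IsRoot, eval_map, ← aeval_def, aeval_algebraMap_apply] using this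
  -- find another root
  obtain ⟨y, hyroot, hyne⟩ : ∃ y ∈ p.roots, y ≠ algebraMap K L x := by
    by_contra h
    push_neg at h
    have : p.roots.toFinset ⊆ {algebraMap K L x} := fun z hz =>
      Finset.mem_singleton.mpr (h z (Multiset.mem_toFinset.mp hz))
    have hle := Finset.card_le_card this
    rw [Multiset.toFinset_card_of_nodup hnodup, hcard, Finset.card_singleton] at hle
    omega
  have hy0 : aeval y (minpoly k x) = 0 := by
    have := (mem_roots (by rw [hp]; exact Polynomial.map_ne_zero hne)).mp hyroot
    simpa [hp, IsRoot, eval_map, ← aeval_def] using this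
  -- embedding σ : K →ₐ[k] L with σ x = y
  obtain ⟨σ, hσx⟩ : ∃ σ : K →ₐ[k] L, σ x = y :=
    IntermediateField.exists_algHom_of_splits_of_aeval
      (fun s => ⟨Algebra.IsIntegral.isIntegral s, IsAlgClosed.splits _⟩) hy0
  have hσxne : σ x ≠ algebraMap K L x := hσx ▸ hyne
  -- the injection into N-th roots of unity
  set S := {α : k | (x + algebraMap k K α) ^ N ∈ Set.range (algebraMap k K)}
  set f : k → L := fun α => (σ x + algebraMap k L α) / (algebraMap K L x + algebraMap k L α)
  have hden : ∀ α : k, x + algebraMap k K α ≠ 0 := by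
    intro α h
    apply hx
    exact ⟨-α, by rw [map_neg]; linear_combination -h⟩
  have hdenL : ∀ α : k, algebraMap K L x + algebraMap k L α ≠ 0 := by
    intro α h
    apply hden α
    apply (algebraMap K L).injective
    rw [map_add, map_zero, ← IsScalarTower.algebraMap_apply k K L]
    exact h
  have hmaps : Set.MapsTo f S ↑(nthRootsFinset N (1 : L)) := by
    intro α hα
    obtain ⟨c, hc⟩ := hα
    rw [Finset.mem_coe, mem_nthRootsFinset hN (1 : L)]
    have hσ : (σ x + algebraMap k L α) ^ N = algebraMap k L c := by
      have := congrArg σ hc.symm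
      simpa [map_pow, map_add, AlgHom.commutes] using this
    have hid : (algebraMap K L x + algebraMap k L α) ^ N = algebraMap k L c := by
      have := congrArg (algebraMap K L) hc.symm
      rw [map_pow, map_add, ← IsScalarTower.algebraMap_apply k K L,
        ← IsScalarTower.algebraMap_apply k K L] at this
      exact this
    rw [div_pow, hσ, hid, div_self]
    rw [← hid]
    exact pow_ne_zero _ (hdenL α)
  have hinj : Set.InjOn f S := by
    intro α _ β _ hfab
    have h1 := hdenL α
    have h2 := hdenL β
    rw [div_eq_div_iff h1 h2] at hfab
    have : (σ x - algebraMap K L x) * (algebraMap k L β - algebraMap k L α) = 0 := by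
      linear_combination hfab
    rcases mul_eq_zero.mp this with h | h
    · exact absurd (sub_eq_zero.mp h) hσxne
    · exact ((algebraMap k L).injective (sub_eq_zero.mp h)).symm
  have hfin : S.Finite := Set.Finite.of_finite_image
    ((nthRootsFinset N (1 : L)).finite_toSet.subset hmaps.image_subset) hinj
  refine ⟨hfin, ?_⟩
  calc S.ncard = (f '' S).ncard := (Set.ncard_image_of_injOn hinj).symm
    _ ≤ (↑(nthRootsFinset N (1 : L)) : Set L).ncard := by
        exact Set.ncard_le_ncard hmaps.image_subset (nthRootsFinset N (1 : L)).finite_toSet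
    _ = (nthRootsFinset N (1 : L)).card := by rw [Set.ncard_coe_finset]
    _ ≤ N := by
        unfold nthRootsFinset
        exact (Multiset.toFinset_card_le _).trans (card_nthRoots N 1)
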